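/- Let D and K be symmetric positive definite real n×n matrices. Then the 2n×2n real block matrix A = fromBlocks 0 I (−K) (−D) (upper-left block zero, upper-right block the n×n identity, lower-left block −K, lower-right block −D) is Hurwitz: every eigenvalue λ ∈ ℂ of A (i.e., every root of the characteristic polynomial of A over ℂ) has strictly negative real part. -/

import Mathlib

open Matrix Polynomial
open scoped ComplexOrder

lemma exists_eigenvector_of_isRoot_charpoly {m : Type*} [Fintype m] [DecidableEq m]
    (M : Matrix m m ℂ) (μ : ℂ) (h : M.charpoly.IsRoot μ) :
    ∃ v : m → ℂ, v ≠ 0 ∧ M *ᵥ v = μ • v := by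
  have hdet : (μ • (1 : Matrix m m ℂ) - M).det = 0 := by
    have h' := h
    rw [Polynomial.IsRoot, Matrix.charpoly, eval_det,
      Matrix.matPolyEquiv_charmatrix] at h'
    simpa [Matrix.scalar, Algebra.algebraMap_eq_smul_one] using h'
  obtain ⟨v, hv0, hv⟩ := Matrix.exists_mulVec_eq_zero_iff.mpr hdet
  refine ⟨v, hv0, ?_⟩
  rw [Matrix.sub_mulVec, Matrix.smul_mulVec, Matrix.one_mulVec, sub_eq_zero] at hv
  exact hv.symm

lemma real_symm_posdef_complex_quad {n : ℕ} (S : Matrix (Fin n) (Fin n) ℝ) (hSsymm : S.IsSymm)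
    (hS : S.PosDef) (x : Fin n → ℂ) (hx : x ≠ 0) :
    0 < (star x ⬝ᵥ ((S.map (algebraMap ℝ ℂ)) *ᵥ x)).re ∧
      (star x ⬝ᵥ ((S.map (algebraMap ℝ ℂ)) *ᵥ x)).im = 0 := by
  set a : Fin n → ℝ := fun i => (x i).re with ha
  set b : Fin n → ℝ := fun i => (x i).im with hb
  have hsym : ∀ u w : Fin n → ℝ, u ⬝ᵥ S *ᵥ w = w ⬝ᵥ S *ᵥ u := by
    intro u w
    rw [Matrix.dotProduct_mulVec, ← Matrix.mulVec_transpose, hSsymm.eq,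
      dotProduct_comm]
  have expand : star x ⬝ᵥ ((S.map (algebraMap ℝ ℂ)) *ᵥ x)
      = ∑ i, ∑ j, (starRingEnd ℂ) (x i) * (((S i j : ℝ) : ℂ) * x j) := by
    simp [dotProduct, Matrix.mulVec, Finset.mul_sum, Complex.star_def]
  have hre : (star x ⬝ᵥ ((S.map (algebraMap ℝ ℂ)) *ᵥ x)).re
      = a ⬝ᵥ S *ᵥ a + b ⬝ᵥ S *ᵥ b := by
    rw [expand]
    have rhs : a ⬝ᵥ S *ᵥ a + b ⬝ᵥ S *ᵥ b
        = ∑ i, ∑ j, (a i * (S i j * a j) + b i * (S i j * b j)) := by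
      simp [dotProduct, Matrix.mulVec, Finset.mul_sum, Finset.sum_add_distrib]
    rw [rhs, Complex.re_sum]
    refine Finset.sum_congr rfl fun i _ => ?_
    rw [Complex.re_sum]
    refine Finset.sum_congr rfl fun j _ => ?_
    simp only [Complex.mul_re, Complex.mul_im, Complex.conj_re, Complex.conj_im,
      Complex.ofReal_re, Complex.ofReal_im, ha, hb]
    ring
  have him : (star x ⬝ᵥ ((S.map (algebraMap ℝ ℂ)) *ᵥ x)).im
      = a ⬝ᵥ S *ᵥ b - b ⬝ᵥ S *ᵥ a := by
    rw [expand]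
    have rhs : a ⬝ᵥ S *ᵥ b - b ⬝ᵥ S *ᵥ a
        = ∑ i, ∑ j, (a i * (S i j * b j) - b i * (S i j * a j)) := by
      simp [dotProduct, Matrix.mulVec, Finset.mul_sum, Finset.sum_sub_distrib]
    rw [rhs, Complex.im_sum]
    refine Finset.sum_congr rfl fun i _ => ?_
    rw [Complex.im_sum]
    refine Finset.sum_congr rfl fun j _ => ?_
    simp only [Complex.mul_re, Complex.mul_im, Complex.conj_re, Complex.conj_im,
      Complex.ofReal_re, Complex.ofReal_im, ha, hb]
    ring
  constructor
  · rw [hre]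
    have hab : a ≠ 0 ∨ b ≠ 0 := by
      by_contra hc
      push_neg at hc
      apply hx
      funext i
      have h1 : a i = 0 := by rw [hc.1]; rfl
      have h2 : b i = 0 := by rw [hc.2]; rfl
      exact Complex.ext h1 h2
    have hsa : ∀ u : Fin n → ℝ, 0 ≤ u ⬝ᵥ S *ᵥ u := fun u => by
      simpa using hS.posSemidef.dotProduct_mulVec_nonneg u
    have hpa : ∀ u : Fin n → ℝ, u ≠ 0 → 0 < u ⬝ᵥ S *ᵥ u := fun u hu => by
      simpa using hS.dotProduct_mulVec_pos hu
    rcases hab with h | h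
    · have := hpa a h; have := hsa b; linarith
    · have := hpa b h; have := hsa a; linarith
  · rw [him, hsym a b, sub_self]

/-- **The companion matrix of `ẍ = −D ẋ − K x` is Hurwitz.**
If `D` and `K` are symmetric positive definite real `n×n` matrices, then every
eigenvalue `μ ∈ ℂ` of the block matrix `A = fromBlocks 0 I (−K) (−D)` (every root
of its characteristic polynomial over `ℂ`) has strictly negative real part. -/
theorem companion_matrix_hurwitz
    (n : ℕ)
    (D K : Matrix (Fin n) (Fin n) ℝ)
    (hDsymm : D.IsSymm) (hDpd : D.PosDef)
    (hKsymm : K.IsSymm) (hKpd : K.PosDef)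
    (A : Matrix (Fin n ⊕ Fin n) (Fin n ⊕ Fin n) ℝ)
    (hA : A = Matrix.fromBlocks (0 : Matrix (Fin n) (Fin n) ℝ)
      (1 : Matrix (Fin n) (Fin n) ℝ) (-K) (-D)) :
    ∀ μ : ℂ, (A.map (algebraMap ℝ ℂ)).charpoly.IsRoot μ → μ.re < 0 := by
  intro μ hroot
  obtain ⟨v, hv0, hv⟩ := exists_eigenvector_of_isRoot_charpoly _ μ hroot
  set K' : Matrix (Fin n) (Fin n) ℂ := K.map (algebraMap ℝ ℂ) with hK'
  set D' : Matrix (Fin n) (Fin n) ℂ := D.map (algebraMap ℝ ℂ) with hD'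
  have hmap : A.map (algebraMap ℝ ℂ)
      = Matrix.fromBlocks 0 1 (-K') (-D') := by
    subst hA
    ext (i | i) (j | j) <;>
      simp [Matrix.map_apply, Matrix.one_apply, apply_ite, hK', hD']
  rw [hmap] at hv
  set x : Fin n → ℂ := v ∘ Sum.inl with hxdef
  set y : Fin n → ℂ := v ∘ Sum.inr with hydef
  rw [Matrix.fromBlocks_mulVec] at hv
  have h1 : y = μ • x := by
    funext i
    have := congrFun hv (Sum.inl i)
    simpa [Matrix.zero_mulVec, Matrix.one_mulVec, hxdef, hydef] using this
  have h2 : (-K') *ᵥ x + (-D') *ᵥ y = μ • y := by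
    funext i
    have := congrFun hv (Sum.inr i)
    simpa [hxdef, hydef] using this
  have hxne : x ≠ 0 := by
    intro hx0
    apply hv0
    funext i
    cases i with
    | inl i => exact congrFun hx0 i
    | inr i =>
      have : y i = 0 := by rw [h1, hx0]; simp
      exact this
  have hvec : K' *ᵥ x + μ • (D' *ᵥ x) + (μ ^ 2) • x = 0 := by
    rw [h1] at h2
    rw [Matrix.neg_mulVec, Matrix.neg_mulVec, Matrix.mulVec_smul] at h2
    funext i
    have := congrFun h2 i
    simp only [Pi.add_apply, Pi.neg_apply, Pi.smul_apply, smul_eq_mul, Pi.zero_apply] at this ⊢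
    linear_combination -this
  have hdot : star x ⬝ᵥ (K' *ᵥ x) + μ * (star x ⬝ᵥ (D' *ᵥ x)) + μ ^ 2 * (star x ⬝ᵥ x) = 0 := by
    have := congrArg (fun w => star x ⬝ᵥ w) hvec
    simpa [dotProduct_add, dotProduct_smul, smul_eq_mul] using this
  obtain ⟨hkre, hkim⟩ := real_symm_posdef_complex_quad K hKsymm hKpd x hxne
  obtain ⟨hdre, hdim⟩ := real_symm_posdef_complex_quad D hDsymm hDpd x hxne
  have hpos := Matrix.dotProduct_star_self_pos_iff (R := ℂ) (v := x) |>.mpr hxne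
  rw [Complex.lt_def] at hpos
  have hare : 0 < (star x ⬝ᵥ x).re := by simpa using hpos.1
  have haim : (star x ⬝ᵥ x).im = 0 := by simpa using hpos.2.symm
  set k := star x ⬝ᵥ (K' *ᵥ x) with hk
  set d := star x ⬝ᵥ (D' *ᵥ x) with hd
  set A0 := star x ⬝ᵥ x with hA0
  have hkC : k = (k.re : ℂ) := Complex.ext (by simp) (by simp [hkim])
  have hdC : d = (d.re : ℂ) := Complex.ext (by simp) (by simp [hdim])
  have haC : A0 = (A0.re : ℂ) := Complex.ext (by simp) (by simp [haim])
  rw [hkC, hdC, haC] at hdot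
  have e1 := congrArg Complex.re hdot
  have e2 := congrArg Complex.im hdot
  simp only [Complex.add_re, Complex.add_im, Complex.mul_re, Complex.mul_im,
    Complex.ofReal_re, Complex.ofReal_im, Complex.zero_re, Complex.zero_im, pow_two,
    mul_zero, zero_mul, sub_zero, add_zero, zero_add] at e1 e2
  by_contra hcon
  push_neg at hcon
  have him0 : μ.im = 0 := by
    have hfac : μ.im * (d.re + (μ.re + μ.re) * A0.re) = 0 := by linear_combination e2
    have hposf : 0 < d.re + (μ.re + μ.re) * A0.re := by nlinarith
    rcases mul_eq_zero.mp hfac with h | h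
    · exact h
    · exact absurd h hposf.ne'
  rw [him0] at e1
  nlinarith [e1, hkre, mul_nonneg hcon hdre.le,
    mul_nonneg (mul_nonneg hcon hcon) hare.le]
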